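/- Let G be a connected (P2 ∪ P3)-free graph and S ⊆ V(G) a cutset such that each vertex in S has neighbors in at least two components of G - S. Let D1 and D2 be two clique components of G - S each with at least two vertices. Then for every vertex x ∈ S, either x is adjacent to at least |V(D_i)| - 1 vertices of D_i for both i = 1, 2, or x is adjacent to all vertices of at least one of D1, D2. -/

import Mathlib

open SimpleGraph

variable {V : Type*}

/-- The disjoint union `P2 ∪ P3`: edge 0-1, path 2-3-4, on `Fin 5`. -/
def P2P3 : SimpleGraph (Fin 5) := SimpleGraph.fromRel (fun a b =>
  (a = 0 ∧ b = 1) ∨ (a = 2 ∧ b = 3) ∨ (a = 3 ∧ b = 4))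

/-- `G` has no induced subgraph isomorphic to `P2 ∪ P3`. -/
def P2P3Free (G : SimpleGraph V) : Prop :=
  ¬ ∃ f : Fin 5 ↪ V, ∀ a b, P2P3.Adj a b ↔ G.Adj (f a) (f b)

/-- The number of connected components of `G - S`. -/
noncomputable def numComponents [Fintype V] (G : SimpleGraph V) (S : Finset V) : ℕ :=
  Nat.card ((G.induce ((↑S : Set V)ᶜ)).ConnectedComponent)

/-- `G` is `t`-tough: `|S| ≥ t·c(G-S)` whenever `c(G-S) ≥ 2`. -/
def IsTough [Fintype V] (t : ℝ) (G : SimpleGraph V) : Prop :=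
  ∀ S : Finset V, 2 ≤ numComponents G S → t * numComponents G S ≤ S.card

lemma p2p3_aux {G : SimpleGraph V} (hfree : P2P3Free G) (v0 v1 v2 v3 v4 : V)
    (h01 : G.Adj v0 v1) (h23 : G.Adj v2 v3) (h34 : G.Adj v3 v4)
    (h02 : ¬G.Adj v0 v2) (h03 : ¬G.Adj v0 v3) (h04 : ¬G.Adj v0 v4)
    (h12 : ¬G.Adj v1 v2) (h13 : ¬G.Adj v1 v3) (h14 : ¬G.Adj v1 v4)
    (h24 : ¬G.Adj v2 v4) (hne24 : v2 ≠ v4) : False := by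
  have d01 : v0 ≠ v1 := h01.ne
  have d23 : v2 ≠ v3 := h23.ne
  have d34 : v3 ≠ v4 := h34.ne
  have d02 : v0 ≠ v2 := fun h => h12 (h ▸ h01.symm)
  have d03 : v0 ≠ v3 := fun h => h04 (h ▸ h34)
  have d04 : v0 ≠ v4 := fun h => h03 (h ▸ h34.symm)
  have d12 : v1 ≠ v2 := fun h => h02 (h ▸ h01)
  have d13 : v1 ≠ v3 := fun h => h14 (h ▸ h34)
  have d14 : v1 ≠ v4 := fun h => h13 (h ▸ h34.symm)
  apply hfree
  refine ⟨⟨![v0,v1,v2,v3,v4], ?_⟩, ?_⟩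
  · intro i j hij
    fin_cases i <;> fin_cases j <;> simp_all
  · intro a b
    show P2P3.Adj a b ↔ G.Adj (![v0,v1,v2,v3,v4] a) (![v0,v1,v2,v3,v4] b)
    fin_cases a <;> fin_cases b <;>
      simp_all [P2P3, SimpleGraph.fromRel_adj, G.adj_comm, G.irrefl]

lemma comp_not_adj {G : SimpleGraph V} {s : Set V}
    {C D : (G.induce s).ConnectedComponent} (h : C ≠ D)
    {u w : s} (hu : u ∈ C.supp) (hw : w ∈ D.supp) : ¬ G.Adj ↑u ↑w := by
  intro hadj
  have hH : (G.induce s).Adj u w := hadj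
  apply h
  rw [ConnectedComponent.mem_supp_iff] at hu hw
  rw [← hu, ← hw]
  exact ConnectedComponent.sound hH.reachable

lemma main_aux [Fintype V] {G : SimpleGraph V} (hfree : P2P3Free G) {S : Finset V}
    {x : V} (hx : x ∈ S)
    (hS2 : 2 ≤ {D : (G.induce ((↑S : Set V)ᶜ)).ConnectedComponent |
      ∃ v ∈ D.supp, G.Adj x ↑v}.ncard)
    {A B : (G.induce ((↑S : Set V)ᶜ)).ConnectedComponent} (hAB : A ≠ B)
    (hcA : G.IsClique (Subtype.val '' A.supp)) (hcB : G.IsClique (Subtype.val '' B.supp))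
    (hnB : 2 ≤ (Subtype.val '' B.supp).ncard)
    (a b : ((↑S : Set V)ᶜ : Set V)) (ha : a ∈ A.supp) (hb : b ∈ A.supp) (hab : a ≠ b)
    (hxa : ¬ G.Adj x ↑a) (hxb : ¬ G.Adj x ↑b)
    (c : ((↑S : Set V)ᶜ : Set V)) (hc : c ∈ B.supp) (hxc : ¬ G.Adj x ↑c) : False := by
  have habv : (a : V) ≠ (b : V) := fun h => hab (Subtype.val_injective h)
  have hadjab : G.Adj ↑a ↑b := hcA ⟨a, ha, rfl⟩ ⟨b, hb, rfl⟩ habv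
  have hxnotc : x ≠ ↑c := fun h => c.2 (h ▸ hx)
  by_cases hnbr : ∃ d ∈ B.supp, G.Adj x ↑d
  · obtain ⟨d, hd, hxd⟩ := hnbr
    have hcd : (c : V) ≠ (d : V) := fun h => hxc (by rw [h]; exact hxd)
    have hadjcd : G.Adj ↑c ↑d := hcB ⟨c, hc, rfl⟩ ⟨d, hd, rfl⟩ hcd
    exact p2p3_aux hfree ↑a ↑b ↑c ↑d x hadjab hadjcd hxd.symm
      (comp_not_adj hAB ha hc) (comp_not_adj hAB ha hd)
      (fun h => hxa h.symm)
      (comp_not_adj hAB hb hc) (comp_not_adj hAB hb hd)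
      (fun h => hxb h.symm)
      (fun h => hxc h.symm) (Ne.symm hxnotc)
  · push_neg at hnbr
    -- two distinct components with neighbours of x
    obtain ⟨C, C', hCmem, hC'mem, hCC'⟩ :=
      (Set.one_lt_ncard_iff (Set.toFinite _)).mp hS2
    obtain ⟨v, hv, hxv⟩ := hCmem
    obtain ⟨w, hw, hxw⟩ := hC'mem
    have hCB : C ≠ B := fun h => hnbr v (h ▸ hv) hxv
    have hC'B : C' ≠ B := fun h => hnbr w (h ▸ hw) hxw
    -- two distinct vertices in B
    obtain ⟨c1, c2, hc1m, hc2m, hc12⟩ :=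
      (Set.one_lt_ncard_iff (Set.toFinite _)).mp hnB
    obtain ⟨c1', hc1', rfl⟩ := hc1m
    obtain ⟨c2', hc2', rfl⟩ := hc2m
    have hadjc : G.Adj ↑c1' ↑c2' := hcB ⟨c1', hc1', rfl⟩ ⟨c2', hc2', rfl⟩ hc12
    have hvw : (v : V) ≠ (w : V) := by
      intro h
      apply hCC'
      rw [ConnectedComponent.mem_supp_iff] at hv hw
      rw [← hv, ← hw]
      congr 1
      exact Subtype.val_injective h
    exact p2p3_aux hfree ↑c1' ↑c2' ↑v x ↑w hadjc hxv.symm hxw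
      (comp_not_adj (Ne.symm hCB) hc1' hv)
      (fun h => hnbr c1' hc1' h.symm)
      (comp_not_adj (Ne.symm hC'B) hc1' hw)
      (comp_not_adj (Ne.symm hCB) hc2' hv)
      (fun h => hnbr c2' hc2' h.symm)
      (comp_not_adj (Ne.symm hC'B) hc2' hw)
      (comp_not_adj hCC' hv hw) hvw

lemma two_missed [Fintype V] {G : SimpleGraph V} {x : V}
    {A : Set V}
    (h : ¬ (A.ncard - 1 ≤ (A ∩ {v | G.Adj x v}).ncard)) :
    ∃ a ∈ A, ∃ b ∈ A, a ≠ b ∧ ¬ G.Adj x a ∧ ¬ G.Adj x b := by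
  push_neg at h
  have hsum := Set.ncard_inter_add_ncard_diff_eq_ncard A {v | G.Adj x v} (Set.toFinite _)
  have h2 : 1 < (A \ {v | G.Adj x v}).ncard := by omega
  obtain ⟨a, b, ha, hb, hab⟩ := (Set.one_lt_ncard_iff (Set.toFinite _)).mp h2
  exact ⟨a, ha.1, b, hb.1, hab, ha.2, hb.2⟩

theorem stmt7 [Fintype V] (G : SimpleGraph V) (hconn : G.Connected) (hfree : P2P3Free G)
    (S : Finset V) (hcut : 2 ≤ numComponents G S)
    (hS : ∀ x ∈ S, 2 ≤ {D : (G.induce ((↑S : Set V)ᶜ)).ConnectedComponent |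
      ∃ v ∈ D.supp, G.Adj x ↑v}.ncard)
    (D1 D2 : (G.induce ((↑S : Set V)ᶜ)).ConnectedComponent) (hD12 : D1 ≠ D2)
    (hc1 : G.IsClique (Subtype.val '' D1.supp)) (hc2 : G.IsClique (Subtype.val '' D2.supp))
    (hn1 : 2 ≤ (Subtype.val '' D1.supp).ncard) (hn2 : 2 ≤ (Subtype.val '' D2.supp).ncard) :
    ∀ x ∈ S,
      ((Subtype.val '' D1.supp).ncard - 1 ≤
          ((Subtype.val '' D1.supp) ∩ {v | G.Adj x v}).ncard ∧
        (Subtype.val '' D2.supp).ncard - 1 ≤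
          ((Subtype.val '' D2.supp) ∩ {v | G.Adj x v}).ncard) ∨
      (∀ v ∈ D1.supp, G.Adj x ↑v) ∨ (∀ v ∈ D2.supp, G.Adj x ↑v) := by
  intro x hx
  by_contra hcon
  push_neg at hcon
  obtain ⟨hA, hB1, hB2⟩ := hcon
  obtain ⟨p1, hp1, hxp1⟩ := hB1
  obtain ⟨p2, hp2, hxp2⟩ := hB2
  have hA' : ¬ ((Subtype.val '' D1.supp).ncard - 1 ≤
        ((Subtype.val '' D1.supp) ∩ {v | G.Adj x v}).ncard) ∨
      ¬ ((Subtype.val '' D2.supp).ncard - 1 ≤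
        ((Subtype.val '' D2.supp) ∩ {v | G.Adj x v}).ncard) := by
    by_contra h
    push_neg at h
    exact absurd (hA h.1) (not_lt.mpr h.2)
  rcases hA' with h | h
  · obtain ⟨av, hav, bv, hbv, hab, hxa, hxb⟩ := two_missed h
    obtain ⟨a, ha, rfl⟩ := hav
    obtain ⟨b, hb, rfl⟩ := hbv
    exact main_aux hfree hx (hS x hx) hD12 hc1 hc2 hn2 a b ha hb
      (fun hh => hab (congrArg Subtype.val hh)) hxa hxb p2 hp2 hxp2
  · obtain ⟨av, hav, bv, hbv, hab, hxa, hxb⟩ := two_missed h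
    obtain ⟨a, ha, rfl⟩ := hav
    obtain ⟨b, hb, rfl⟩ := hbv
    exact main_aux hfree hx (hS x hx) (Ne.symm hD12) hc2 hc1 hn1 a b ha hb
      (fun hh => hab (congrArg Subtype.val hh)) hxa hxb p1 hp1 hxp1
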